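/- Let x₁ > x₂ > ⋯ > x_q > 0 with positive integer multiplicities m₁,…,m_q, and define F(λ) = ∑_{i=1}^q m_i x_i/(x_i − λ) − 1. Then F has exactly q real roots η₁ > η₂ > ⋯ > η_q, and they interlace: x₁ > η₁ > x₂ > η₂ > ⋯ > η_{q−1} > x_q > 0 ≥ η_q, where moreover η_q < 0 whenever ∑_{i=1}^q m_i > 1. -/

import Mathlib

open Finset
open Filter Topology Set

private lemma term_lt {c x a b : ℝ} (hc : 0 < c) (hab : a < b)
    (hs : 0 < (x - a) * (x - b)) : c / (x - a) < c / (x - b) := by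
  have ha : x - a ≠ 0 := fun h => by simp [h] at hs
  have hb : x - b ≠ 0 := fun h => by simp [h] at hs
  have key : c / (x - b) - c / (x - a) = c * (b - a) / ((x - a) * (x - b)) := by
    field_simp; ring
  have : 0 < c * (b - a) / ((x - a) * (x - b)) :=
    div_pos (mul_pos hc (by linarith)) hs
  linarith [key ▸ this]

private noncomputable def FF (q : ℕ) (x : Fin q → ℝ) (m : Fin q → ℕ) (t : ℝ) : ℝ :=
  (∑ j, (m j : ℝ) * x j / (x j - t)) - 1

private lemma F_strict {q : ℕ} (hq : 1 ≤ q) (x : Fin q → ℝ) (m : Fin q → ℕ)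
    (hxpos : ∀ i, 0 < x i) (hm : ∀ i, 1 ≤ m i) {a b : ℝ} (hab : a < b)
    (hs : ∀ j, 0 < (x j - a) * (x j - b)) : FF q x m a < FF q x m b := by
  have : Nonempty (Fin q) := ⟨⟨0, hq⟩⟩
  have h := Finset.sum_lt_sum_of_nonempty (univ_nonempty)
    (fun j _ => term_lt (c := (m j : ℝ) * x j)
      (mul_pos (by exact_mod_cast hm j) (hxpos j)) hab (hs j))
  unfold FF; linarith

private lemma F_cont {q : ℕ} (x : Fin q → ℝ) (m : Fin q → ℕ) {s : Set ℝ}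
    (hs : ∀ j, ∀ t ∈ s, x j - t ≠ 0) : ContinuousOn (FF q x m) s := by
  unfold FF
  refine ContinuousOn.sub ?_ continuousOn_const
  refine continuousOn_finset_sum _ fun j _ => ContinuousOn.div continuousOn_const
    (continuousOn_const.sub continuousOn_id) (hs j)

private lemma F_atBot {q : ℕ} (x : Fin q → ℝ) (m : Fin q → ℕ) :
    Tendsto (FF q x m) atBot (𝓝 (-1)) := by
  have h : ∀ j : Fin q, Tendsto (fun t => (m j : ℝ) * x j / (x j - t)) atBot (𝓝 0) := by
    intro j
    apply Tendsto.div_atTop (tendsto_const_nhds)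
    have : Tendsto (fun t : ℝ => x j + -t) atBot atTop :=
      tendsto_atTop_add_const_left _ _ tendsto_neg_atBot_atTop
    exact this.congr fun t => (sub_eq_add_neg _ _).symm
  have := tendsto_finset_sum Finset.univ (fun j _ => h j)
  have h2 := this.sub (tendsto_const_nhds (x := (1:ℝ)))
  simp only [Finset.sum_const_zero, zero_sub] at h2
  exact h2

private lemma rest_tendsto {q : ℕ} (x : Fin q → ℝ) (m : Fin q → ℕ) (i : Fin q)
    (hne : ∀ j, j ≠ i → x j - x i ≠ 0) (l : Filter ℝ) (hl : l ≤ 𝓝 (x i)) :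
    Tendsto (fun t => ∑ j ∈ univ.erase i, (m j : ℝ) * x j / (x j - t)) l
      (𝓝 (∑ j ∈ univ.erase i, (m j : ℝ) * x j / (x j - x i))) := by
  refine Tendsto.mono_left ?_ hl
  refine tendsto_finset_sum _ fun j hj => ?_
  have hj' := Finset.ne_of_mem_erase hj
  exact (Tendsto.div tendsto_const_nhds (tendsto_const_nhds.sub tendsto_id) (hne j hj'))

private lemma F_split {q : ℕ} (x : Fin q → ℝ) (m : Fin q → ℕ) (i : Fin q) (t : ℝ) :
    FF q x m t = (m i : ℝ) * x i / (x i - t)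
      + ((∑ j ∈ univ.erase i, (m j : ℝ) * x j / (x j - t)) - 1) := by
  unfold FF
  rw [← Finset.add_sum_erase _ _ (mem_univ i)]
  ring

private lemma F_tendsto_atTop {q : ℕ} (x : Fin q → ℝ) (m : Fin q → ℕ)
    (hxpos : ∀ i, 0 < x i) (hm : ∀ i, 1 ≤ m i) (i : Fin q)
    (hne : ∀ j, j ≠ i → x j - x i ≠ 0) {lo : ℝ} (hlo : lo < x i) :
    Tendsto (FF q x m) (𝓝[Set.Ioo lo (x i)] (x i)) atTop := by
  have hterm : Tendsto (fun t => (m i : ℝ) * x i / (x i - t))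
      (𝓝[Set.Ioo lo (x i)] (x i)) atTop := by
    have h1 : Tendsto (fun t => x i - t) (𝓝[Set.Ioo lo (x i)] (x i)) (𝓝[>] 0) := by
      rw [tendsto_nhdsWithin_iff]
      constructor
      · refine tendsto_nhdsWithin_of_tendsto_nhds ?_
        have h0 : Continuous (fun t : ℝ => x i - t) := continuous_const.sub continuous_id
        have := h0.tendsto (x i)
        simpa using this
      · filter_upwards [self_mem_nhdsWithin] with t ht
        exact Set.mem_Ioi.mpr (by linarith [ht.2])
    have h2 := (tendsto_inv_nhdsGT_zero).comp h1
    have h3 := Tendsto.const_mul_atTop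
      (mul_pos (show (0:ℝ) < m i by exact_mod_cast hm i) (hxpos i)) h2
    simpa [Function.comp, div_eq_mul_inv] using h3
  have hrest := rest_tendsto x m i hne (𝓝[Set.Ioo lo (x i)] (x i)) nhdsWithin_le_nhds
  have := hterm.atTop_add (hrest.sub (tendsto_const_nhds (x := (1:ℝ))))
  refine this.congr fun t => (F_split x m i t).symm

private lemma F_tendsto_atBot {q : ℕ} (x : Fin q → ℝ) (m : Fin q → ℕ)
    (hxpos : ∀ i, 0 < x i) (hm : ∀ i, 1 ≤ m i) (i : Fin q)
    (hne : ∀ j, j ≠ i → x j - x i ≠ 0) {hi : ℝ} (hhi : x i < hi) :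
    Tendsto (FF q x m) (𝓝[Set.Ioo (x i) hi] (x i)) atBot := by
  have hterm : Tendsto (fun t => (m i : ℝ) * x i / (x i - t))
      (𝓝[Set.Ioo (x i) hi] (x i)) atBot := by
    have h1 : Tendsto (fun t => t - x i) (𝓝[Set.Ioo (x i) hi] (x i)) (𝓝[>] 0) := by
      rw [tendsto_nhdsWithin_iff]
      constructor
      · refine tendsto_nhdsWithin_of_tendsto_nhds ?_
        have h0 : Continuous (fun t : ℝ => t - x i) := continuous_id.sub continuous_const
        have := h0.tendsto (x i)
        simpa using this
      · filter_upwards [self_mem_nhdsWithin] with t ht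
        exact Set.mem_Ioi.mpr (by linarith [ht.1])
    have h2 := (tendsto_inv_nhdsGT_zero).comp h1
    have h3 := Tendsto.const_mul_atTop
      (mul_pos (show (0:ℝ) < m i by exact_mod_cast hm i) (hxpos i)) h2
    have h4 := tendsto_neg_atTop_atBot.comp h3
    refine h4.congr fun t => ?_
    simp only [Function.comp]
    rw [div_eq_mul_inv, show (x i - t) = -(t - x i) by ring, inv_neg]
    ring
  have hrest := rest_tendsto x m i hne (𝓝[Set.Ioo (x i) hi] (x i)) nhdsWithin_le_nhds
  have := hterm.atBot_add (hrest.sub (tendsto_const_nhds (x := (1:ℝ))))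
  refine this.congr fun t => (F_split x m i t).symm

private lemma root_Icc {q : ℕ} (x : Fin q → ℝ) (m : Fin q → ℕ) {a b : ℝ} (hab : a ≤ b)
    (ha : FF q x m a ≤ 0) (hb : 0 ≤ FF q x m b)
    (hs : ∀ j, ∀ t ∈ Set.Icc a b, x j - t ≠ 0) :
    ∃ c ∈ Set.Icc a b, FF q x m c = 0 := by
  have h := intermediate_value_Icc hab (F_cont x m hs)
  have h0 : (0:ℝ) ∈ Set.Icc (FF q x m a) (FF q x m b) := ⟨ha, hb⟩
  obtain ⟨c, hc, hc0⟩ := h h0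
  exact ⟨c, hc, hc0⟩


private lemma exroot {q : ℕ} (hq : 1 ≤ q) (x : Fin q → ℝ) (hxpos : ∀ i, 0 < x i)
    (hxanti : ∀ i j : Fin q, i < j → x j < x i) (m : Fin q → ℕ) (hm : ∀ i, 1 ≤ m i)
    (i : Fin q) :
    ∃ r : ℝ, FF q x m r = 0 ∧ r < x i ∧
      (∀ hj : (i : ℕ) + 1 < q, x ⟨(i : ℕ) + 1, hj⟩ < r) ∧
      ((i : ℕ) = q - 1 → r ≤ 0 ∧ (1 < ∑ k, m k → r < 0)) := by
  have hne : ∀ j, j ≠ i → x j - x i ≠ 0 := by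
    intro j hj
    rcases lt_or_gt_of_ne (Fin.val_ne_of_ne hj) with h | h
    · exact sub_ne_zero.mpr (ne_of_gt (hxanti j i (by exact h)))
    · exact sub_ne_zero.mpr (ne_of_lt (hxanti i j (by exact h)))
  by_cases hcase : (i : ℕ) + 1 < q
  · -- interior interval (x i', x i)
    set i' : Fin q := ⟨(i : ℕ) + 1, hcase⟩ with hi'def
    have hii' : i < i' := by simp [Fin.lt_def, hi'def]
    have hlo : x i' < x i := hxanti i i' hii'
    -- sign lemma on the open interval
    have signs : ∀ u, u ∈ Set.Ioo (x i') (x i) → ∀ j, 0 < x j - u ∨ x j - u < 0 := by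
      intro u hu j
      by_cases hji : (j : ℕ) ≤ (i : ℕ)
      · left
        have : x i ≤ x j := by
          rcases eq_or_lt_of_le hji with h | h
          · rw [Fin.ext_iff.mpr h]  -- j = i
          · exact le_of_lt (hxanti j i h)
        linarith [hu.2]
      · right
        have : x j ≤ x i' := by
          have : (i' : ℕ) ≤ (j : ℕ) := by simp [hi'def]; omega
          rcases eq_or_lt_of_le this with h | h
          · rw [← Fin.ext_iff.mpr h]
          · exact le_of_lt (hxanti i' j h)
        linarith [hu.1]
    have signprod : ∀ u v : ℝ, u ∈ Set.Ioo (x i') (x i) → v ∈ Set.Ioo (x i') (x i) →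
        ∀ j, 0 < (x j - u) * (x j - v) := by
      intro u v hu hv j
      by_cases hji : (j : ℕ) ≤ (i : ℕ)
      · rcases signs u hu j with h | h
        · rcases signs v hv j with h2 | h2
          · exact mul_pos h h2
          · exfalso
            have hx : x i ≤ x j := by
              rcases eq_or_lt_of_le hji with h3 | h3
              · rw [Fin.ext_iff.mpr h3]
              · exact le_of_lt (hxanti j i h3)
            linarith [hv.2]
        · exfalso
          have hx : x i ≤ x j := by
            rcases eq_or_lt_of_le hji with h3 | h3
            · rw [Fin.ext_iff.mpr h3]
            · exact le_of_lt (hxanti j i h3)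
          linarith [hu.2]
      · have hx : x j ≤ x i' := by
          have h4 : (i' : ℕ) ≤ (j : ℕ) := by simp [hi'def]; omega
          rcases eq_or_lt_of_le h4 with h3 | h3
          · rw [← Fin.ext_iff.mpr h3]
          · exact le_of_lt (hxanti i' j h3)
        have h1 : x j - u < 0 := by linarith [hu.1]
        have h2 : x j - v < 0 := by linarith [hv.1]
        exact mul_pos_of_neg_of_neg h1 h2
    -- find b near x i with F b > 0
    haveI nb1 : (𝓝[Set.Ioo (x i') (x i)] (x i)).NeBot := by
      rw [← mem_closure_iff_nhdsWithin_neBot, closure_Ioo (ne_of_lt hlo)]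
      exact Set.right_mem_Icc.mpr hlo.le
    obtain ⟨b, hbF, hbmem⟩ :=
      (((F_tendsto_atTop x m hxpos hm i hne hlo).eventually_gt_atTop 0).and
        self_mem_nhdsWithin).exists
    -- find a near x i' with F a < 0
    have hne' : ∀ j, j ≠ i' → x j - x i' ≠ 0 := by
      intro j hj
      rcases lt_or_gt_of_ne (Fin.val_ne_of_ne hj) with h | h
      · exact sub_ne_zero.mpr (ne_of_gt (hxanti j i' (by exact h)))
      · exact sub_ne_zero.mpr (ne_of_lt (hxanti i' j (by exact h)))
    haveI nb2 : (𝓝[Set.Ioo (x i') (x i)] (x i')).NeBot := by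
      rw [← mem_closure_iff_nhdsWithin_neBot, closure_Ioo (ne_of_lt hlo)]
      exact Set.left_mem_Icc.mpr hlo.le
    obtain ⟨a, haF, hamem⟩ :=
      (((F_tendsto_atBot x m hxpos hm i' hne' hlo).eventually_lt_atBot 0).and
        self_mem_nhdsWithin).exists
    have hab : a < b := by
      rcases lt_trichotomy a b with h | h | h
      · exact h
      · exfalso; rw [h] at haF; linarith
      · exfalso
        have := F_strict hq x m hxpos hm h (signprod b a hbmem hamem)
        linarith
    obtain ⟨r, hrmem, hr0⟩ := root_Icc x m hab.le haF.le hbF.le (by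
      intro j t ht
      have htmem : t ∈ Set.Ioo (x i') (x i) :=
        ⟨lt_of_lt_of_le hamem.1 ht.1, lt_of_le_of_lt ht.2 hbmem.2⟩
      rcases signs t htmem j with h | h
      · exact ne_of_gt h
      · exact ne_of_lt h)
    refine ⟨r, hr0, ?_, ?_, ?_⟩
    · exact lt_of_le_of_lt hrmem.2 hbmem.2
    · intro hj; exact lt_of_lt_of_le hamem.1 hrmem.1
    · intro h; omega
  · -- last interval (-∞, x i), i = q - 1
    have hieq : (i : ℕ) = q - 1 := by omega
    have himax : ∀ j : Fin q, x i ≤ x j := by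
      intro j
      rcases lt_or_eq_of_le (show (j:ℕ) ≤ (i:ℕ) by omega) with h | h
      · exact le_of_lt (hxanti j i h)
      · rw [Fin.ext_iff.mpr h]
    have hF0 : 0 ≤ FF q x m 0 := by
      unfold FF
      have : ∀ j : Fin q, (m j : ℝ) * x j / (x j - 0) = (m j : ℝ) := by
        intro j
        rw [sub_zero, mul_div_assoc, div_self (ne_of_gt (hxpos j)), mul_one]
      rw [Finset.sum_congr rfl fun j _ => this j]
      have h1 : (1 : ℝ) ≤ ∑ j : Fin q, (m j : ℝ) := by
        calc (1:ℝ) = (q : ℝ) * 1 - (q - 1 : ℝ) := by ring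
        _ ≤ ∑ j : Fin q, (m j : ℝ) := by
            have : ∀ j : Fin q, (1:ℝ) ≤ (m j : ℝ) := fun j => by exact_mod_cast hm j
            have hs := Finset.sum_le_sum fun j (_ : j ∈ Finset.univ) => this j
            simp at hs
            have hq' : (1:ℝ) ≤ (q:ℝ) := by exact_mod_cast hq
            nlinarith
      linarith
    obtain ⟨a, haF, ha0⟩ :=
      (((F_atBot x m).eventually_lt_const (by norm_num : (-1:ℝ) < 0)).and
        (eventually_lt_atBot (0:ℝ))).exists
    obtain ⟨r, hrmem, hr0⟩ := root_Icc x m ha0.le haF.le hF0 (by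
      intro j t ht
      exact ne_of_gt (by linarith [hxpos j, ht.2]))
    have hsigns0 : ∀ u v : ℝ, u ≤ 0 → v ≤ 0 → u < v → FF q x m u < FF q x m v ∨ u = v := by
      intro u v hu hv huv
      left
      exact F_strict hq x m hxpos hm huv fun j =>
        mul_pos (by linarith [hxpos j]) (by linarith [hxpos j])
    refine ⟨r, hr0, lt_of_le_of_lt hrmem.2 (hxpos i), fun hj => absurd hj hcase, fun _ => ?_⟩
    refine ⟨hrmem.2, fun hsum => ?_⟩
    have hF0' : 0 < FF q x m 0 := by
      unfold FF
      have : ∀ j : Fin q, (m j : ℝ) * x j / (x j - 0) = (m j : ℝ) := by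
        intro j
        rw [sub_zero, mul_div_assoc, div_self (ne_of_gt (hxpos j)), mul_one]
      rw [Finset.sum_congr rfl fun j _ => this j]
      have : (1:ℝ) < ∑ j : Fin q, (m j : ℝ) := by exact_mod_cast hsum
      linarith
    rcases lt_or_eq_of_le hrmem.2 with h | h
    · exact h
    · exfalso; rw [h] at hr0; linarith

theorem stmt4 (q : ℕ) (hq : 1 ≤ q) (x : Fin q → ℝ) (hxpos : ∀ i, 0 < x i)
    (hxanti : ∀ i j : Fin q, i < j → x j < x i)
    (m : Fin q → ℕ) (hm : ∀ i, 1 ≤ m i) :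
    ∃ η : Fin q → ℝ,
      (∀ i j : Fin q, i < j → η j < η i) ∧
      (∀ i, (∑ j, (m j : ℝ) * x j / (x j - η i)) - 1 = 0) ∧
      (∀ t : ℝ, (∀ i, t ≠ x i) → (∑ j, (m j : ℝ) * x j / (x j - t)) - 1 = 0 →
        ∃ i, t = η i) ∧
      (∀ i, η i < x i) ∧
      (∀ i j : Fin q, (i : ℕ) + 1 = (j : ℕ) → x j < η i) ∧
      η ⟨q - 1, by omega⟩ ≤ 0 ∧
      (1 < ∑ i, m i → η ⟨q - 1, by omega⟩ < 0) := by
  choose η hroot hlt hgt hlast using exroot hq x hxpos hxanti m hm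
  have hxle : ∀ i j : Fin q, (i : ℕ) ≤ (j : ℕ) → x j ≤ x i := by
    intro i j h
    rcases lt_or_eq_of_le h with h | h
    · exact le_of_lt (hxanti i j h)
    · rw [Fin.ext_iff.mpr h]
  refine ⟨η, ?_, ?_, ?_, hlt, ?_, ?_, ?_⟩
  · -- strictly decreasing
    intro i j hij
    have hij' : (i : ℕ) + 1 ≤ (j : ℕ) := hij
    have hj1 : (i : ℕ) + 1 < q := lt_of_le_of_lt hij' j.isLt
    calc η j < x j := hlt j
      _ ≤ x ⟨(i : ℕ) + 1, hj1⟩ := hxle _ j hij'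
      _ < η i := hgt i hj1
  · -- roots
    intro i
    have := hroot i
    unfold FF at this
    exact this
  · -- completeness
    intro t ht hroot_t
    have hFt : FF q x m t = 0 := by unfold FF; exact hroot_t
    have i0 : Fin q := ⟨0, hq⟩
    have ht0 : t < x (⟨0, hq⟩ : Fin q) := by
      by_contra h
      push_neg at h
      have h' : x (⟨0, hq⟩ : Fin q) < t := lt_of_le_of_ne h (ht _).symm
      have hneg : ∀ j : Fin q, (m j : ℝ) * x j / (x j - t) < 0 := by
        intro j
        have hxj : x j ≤ x (⟨0, hq⟩ : Fin q) := hxle _ j (Nat.zero_le _)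
        apply div_neg_of_pos_of_neg
        · exact mul_pos (by exact_mod_cast hm j) (hxpos j)
        · linarith
      have : Nonempty (Fin q) := ⟨⟨0, hq⟩⟩
      have hs : (∑ j, (m j : ℝ) * x j / (x j - t)) < 0 :=
        Finset.sum_neg (fun j _ => hneg j) Finset.univ_nonempty
      linarith
    -- the largest index with t < x i
    set S : Finset (Fin q) := Finset.univ.filter (fun j => t < x j) with hSdef
    have hSne : S.Nonempty := ⟨⟨0, hq⟩, by simp [hSdef, ht0]⟩
    set i := S.max' hSne with hidef
    have hti : t < x i := by
      have := S.max'_mem hSne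
      simp [hSdef] at this
      exact this
    refine ⟨i, ?_⟩
    -- t and η i lie in same strict-monotonicity region; both are roots
    by_cases hcase : (i : ℕ) + 1 < q
    · set i' : Fin q := ⟨(i : ℕ) + 1, hcase⟩ with hi'def
      have hi'S : i' ∉ S := by
        intro hmem
        have := S.le_max' i' hmem
        rw [← hidef] at this
        have h2 : (i : ℕ) + 1 ≤ (i : ℕ) := this
        omega
      have hxi't : x i' < t := by
        have : ¬ t < x i' := by simpa [hSdef] using hi'S
        exact lt_of_le_of_ne (not_lt.mp this) (ht i').symm
      have htmem : t ∈ Set.Ioo (x i') (x i) := ⟨hxi't, hti⟩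
      have hηmem : η i ∈ Set.Ioo (x i') (x i) := ⟨hgt i hcase, hlt i⟩
      have signs : ∀ u v : ℝ, u ∈ Set.Ioo (x i') (x i) → v ∈ Set.Ioo (x i') (x i) →
          ∀ j, 0 < (x j - u) * (x j - v) := by
        intro u v hu hv j
        by_cases hji : (j : ℕ) ≤ (i : ℕ)
        · have hx : x i ≤ x j := hxle j i hji
          exact mul_pos (by linarith [hu.2]) (by linarith [hv.2])
        · have hx : x j ≤ x i' := hxle i' j (by simp [hi'def]; omega)
          exact mul_pos_of_neg_of_neg (by linarith [hu.1]) (by linarith [hv.1])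
      rcases lt_trichotomy t (η i) with h | h | h
      · exfalso
        have := F_strict hq x m hxpos hm h (signs t (η i) htmem hηmem)
        rw [hFt, hroot i] at this; linarith
      · exact h
      · exfalso
        have := F_strict hq x m hxpos hm h (signs (η i) t hηmem htmem)
        rw [hFt, hroot i] at this; linarith
    · -- i = q - 1 : last interval
      have hieq : (i : ℕ) = q - 1 := by omega
      have hxi : ∀ j : Fin q, x i ≤ x j := fun j => hxle j i (by omega)
      have hηi : η i < x i := hlt i
      have hηle : η i ≤ 0 := (hlast i hieq).1
      have signs : ∀ u v : ℝ, u < x i → v < x i → ∀ j, 0 < (x j - u) * (x j - v) := by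
        intro u v hu hv j
        have := hxi j
        exact mul_pos (by linarith) (by linarith)
      rcases lt_trichotomy t (η i) with h | h | h
      · exfalso
        have := F_strict hq x m hxpos hm h (signs t (η i) hti hηi)
        rw [hFt, hroot i] at this; linarith
      · exact h
      · exfalso
        have := F_strict hq x m hxpos hm h (signs (η i) t hηi hti)
        rw [hFt, hroot i] at this; linarith
  · -- interlacing x j < η i when j = i+1
    intro i j hij
    have hj1 : (i : ℕ) + 1 < q := hij ▸ j.isLt
    have : j = ⟨(i : ℕ) + 1, hj1⟩ := Fin.ext hij.symm
    rw [this]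
    exact hgt i hj1
  · exact (hlast ⟨q - 1, by omega⟩ rfl).1
  · intro h
    exact (hlast ⟨q - 1, by omega⟩ rfl).2 h
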